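/- Suppose −1 is a square in F_q. Then S_{01}^{00} = S_{01}^{10} = ∅. Moreover, for (x,y) ∈ S: (x,y) ∈ S_{00}^{00} if and only if (1−x)(y−x) and (1−y)(y−x) are squares; and (x,y) ∈ S_{00}^{11} if and only if (x²y + xy − x² − y²)(y−x) and (xy² + xy − x² − y²)(y−x) are nonsquares. -/

import Mathlib

open scoped Classical

noncomputable section

/-- The operation of the quasigroup `Q_{a,b}`:
`u*v = u + a(v-u)` if `v-u` is a square, `u*v = u + b(v-u)` otherwise. -/
def qop {F : Type*} [Field F] (a b u v : F) : F :=
  if IsSquare (v - u) then u + a * (v - u) else u + b * (v - u)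

/-- The set `Σ(F)` of pairs `(a,b)` with `a ≠ b`, `a,b ∉ {0,1}`, and
`ab` and `(1-a)(1-b)` both squares. -/
def SigSet (F : Type*) [Field F] : Set (F × F) :=
  {p | p.1 ≠ p.2 ∧ p.1 ≠ 0 ∧ p.1 ≠ 1 ∧ p.2 ≠ 0 ∧ p.2 ≠ 1 ∧
    IsSquare (p.1 * p.2) ∧ IsSquare ((1 - p.1) * (1 - p.2))}

/-- `Q_{a,b}` is maximally nonassociative. -/
def MaxNA {F : Type*} [Field F] (a b : F) : Prop :=
  ∀ u v w : F, qop a b (qop a b u v) w = qop a b u (qop a b v w) → u = v ∧ v = w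

/-- `σ(q)`: the number of pairs `(a,b) ∈ Σ` for which `Q_{a,b}` is
maximally nonassociative. -/
def sigmaCount (F : Type*) [Field F] : ℕ :=
  Set.ncard {p : F × F | p ∈ SigSet F ∧ MaxNA p.1 p.2}

/-- The quadratic orthomorphism `ψ_{a,b}`. -/
def psiOrtho {F : Type*} [Field F] (a b u : F) : F :=
  if IsSquare u then a * u else b * u

/-- The Associativity Equation `ψ(ψ(u)-v) = ψ(-v) + ψ(u-v-ψ(-v))`. -/
def AssocEq {F : Type*} [Field F] (a b u v : F) : Prop :=
  psiOrtho a b (psiOrtho a b u - v) =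
    psiOrtho a b (-v) + psiOrtho a b (u - v - psiOrtho a b (-v))

/-- The set `S(F)` of pairs `(x,y)` of squares with `x ≠ y`, `x,y ∉ {0,1}`. -/
def SPairs (F : Type*) [Field F] : Set (F × F) :=
  {p | IsSquare p.1 ∧ IsSquare p.2 ∧ p.1 ≠ p.2 ∧ p.1 ≠ 0 ∧ p.1 ≠ 1 ∧ p.2 ≠ 0 ∧ p.2 ≠ 1}

/-- The map `Ψ : Σ → S`, `(a,b) ↦ (a/b, (1-a)/(1-b))`. -/
def PsiMap {F : Type*} [Field F] (p : F × F) : F × F :=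
  (p.1 / p.2, (1 - p.1) / (1 - p.2))

/-- The set `E(a,b)` of nonzero solutions of the Associativity Equation. -/
def ESet {F : Type*} [Field F] (a b : F) : Set (F × F) :=
  {p | p ≠ (0, 0) ∧ AssocEq a b p.1 p.2}

/-- The set `E_{ij}^{rs}(a,b)`. -/
def ESub {F : Type*} [Field F] (a b : F) (i j r s : Fin 2) : Set (F × F) :=
  {p | p ∈ ESet a b ∧ (IsSquare p.1 ↔ i = 0) ∧ (IsSquare (-p.2) ↔ j = 0) ∧
    (IsSquare (psiOrtho a b p.1 - p.2) ↔ r = 0) ∧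
    (IsSquare (p.1 - p.2 - psiOrtho a b (-p.2)) ↔ s = 0)}

/-- The set `Σ_{ij}^{rs} = {(a,b) ∈ Σ : E_{ij}^{rs}(a,b) ≠ ∅}`. -/
def SigSub (F : Type*) [Field F] (i j r s : Fin 2) : Set (F × F) :=
  {p | p ∈ SigSet F ∧ (ESub p.1 p.2 i j r s).Nonempty}

/-- The set `S_{ij}^{rs} = Ψ(Σ_{ij}^{rs})`. -/
def SSub (F : Type*) [Field F] (i j r s : Fin 2) : Set (F × F) :=
  PsiMap '' (SigSub F i j r s)

section AuxLemmas
variable {F : Type*} [Field F]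



lemma isSquare_inv'' {s : F} (h : IsSquare s) : IsSquare s⁻¹ := by
  obtain ⟨t, rfl⟩ := h
  exact ⟨t⁻¹, by rw [mul_inv]⟩

lemma isSquare_mul_iff' {s : F} (hs : IsSquare s) (h0 : s ≠ 0) (c : F) :
    IsSquare (s * c) ↔ IsSquare c := by
  constructor
  · intro h
    have hc : c = s⁻¹ * (s * c) := by field_simp
    rw [hc]; exact (isSquare_inv'' hs).mul h
  · exact hs.mul

lemma isSquare_congr' {c d s : F} (hs : IsSquare s) (h0 : s ≠ 0) (h : c = s * d) :
    IsSquare c ↔ IsSquare d := by rw [h]; exact isSquare_mul_iff' hs h0 d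

lemma isSquare_neg_iff (hsq : IsSquare (-1 : F)) (c : F) : IsSquare (-c) ↔ IsSquare c :=
  isSquare_congr' hsq (by norm_num) (by ring)

lemma isSquare_congr2 {c d m n : F} (hm : IsSquare m) (hm0 : m ≠ 0)
    (hn : IsSquare n) (hn0 : n ≠ 0) (h : c * m = d * n) : IsSquare c ↔ IsSquare d := by
  have h1 : IsSquare (c * m) ↔ IsSquare c := by
    rw [mul_comm]; exact isSquare_mul_iff' hm hm0 c
  have h2 : IsSquare (d * n) ↔ IsSquare d := by
    rw [mul_comm]; exact isSquare_mul_iff' hn hn0 d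
  rw [← h1, h, h2]


lemma psi_sq (a b : F) {u : F} (h : IsSquare u) : psiOrtho a b u = a * u := if_pos h
lemma psi_nsq (a b : F) {u : F} (h : ¬ IsSquare u) : psiOrtho a b u = b * u := if_neg h

lemma empty0100 (hsq : IsSquare (-1 : F)) : SSub F 0 1 0 0 = ∅ := by
  rw [SSub, Set.image_eq_empty]
  ext ⟨a, b⟩
  simp only [SigSub, Set.mem_setOf_eq, Set.mem_empty_iff_false, iff_false, not_and]
  rintro ⟨hab, ha0, ha1, hb0, hb1, habsq, -⟩ ⟨⟨u, v⟩, ⟨⟨hne, heq⟩, hu, hv, hr, hs⟩⟩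
  simp only at hu hv hr hs heq
  have hu' : IsSquare u := hu.mpr trivial
  have hv' : ¬ IsSquare (-v) := fun h => absurd (hv.mp h) (by decide)
  have hvsq : ¬ IsSquare v := fun h => hv' ((isSquare_neg_iff hsq v).mpr h)
  have hv0 : v ≠ 0 := fun h => hvsq (by rw [h]; exact IsSquare.zero)
  rw [AssocEq, psi_sq a b hu', psi_nsq a b hv'] at heq
  rw [psi_sq a b hu'] at hr
  rw [psi_nsq a b hv'] at hs
  have hr' : IsSquare (a * u - v) := hr.mpr trivial
  have hs' : IsSquare (u - v - b * (-v)) := hs.mpr trivial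
  rw [psi_sq a b hr', psi_sq a b hs'] at heq
  have ha1' : a - 1 ≠ 0 := sub_ne_zero.mpr ha1
  have key : a * u = b * v := by
    have h0 : (a - 1) * (a * u - b * v) = 0 := by linear_combination heq
    rcases mul_eq_zero.mp h0 with h | h
    · exact absurd h ha1'
    · exact sub_eq_zero.mp h
  have hu0 : u ≠ 0 := by
    rintro rfl
    rw [mul_zero] at key
    exact hv0 (by rcases mul_eq_zero.mp key.symm with h | h; exacts [absurd h hb0, h])
  apply hvsq
  have hveq : v = (a * b)⁻¹ * (u⁻¹ * ((a * u) * (a * u))) := by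
    have e : (a * b)⁻¹ * (u⁻¹ * ((a * u) * (a * u))) = a * u / b := by field_simp
    rw [e, key, mul_div_cancel_left₀ v hb0]
  rw [hveq]
  exact (isSquare_inv'' habsq).mul ((isSquare_inv'' hu').mul ⟨a * u, rfl⟩)

lemma empty0110 (hsq : IsSquare (-1 : F)) : SSub F 0 1 1 0 = ∅ := by
  rw [SSub, Set.image_eq_empty]
  ext ⟨a, b⟩
  simp only [SigSub, Set.mem_setOf_eq, Set.mem_empty_iff_false, iff_false, not_and]
  rintro ⟨hab, ha0, ha1, hb0, hb1, habsq, -⟩ ⟨⟨u, v⟩, ⟨⟨hne, heq⟩, hu, hv, hr, hs⟩⟩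
  simp only at hu hv hr hs heq
  have hu' : IsSquare u := hu.mpr trivial
  have hv' : ¬ IsSquare (-v) := fun h => absurd (hv.mp h) (by decide)
  have hvsq : ¬ IsSquare v := fun h => hv' ((isSquare_neg_iff hsq v).mpr h)
  rw [AssocEq, psi_sq a b hu', psi_nsq a b hv'] at heq
  rw [psi_sq a b hu'] at hr
  rw [psi_nsq a b hv'] at hs
  have hr' : ¬ IsSquare (a * u - v) := fun h => absurd (hr.mp h) (by decide)
  have hs' : IsSquare (u - v - b * (-v)) := hs.mpr trivial
  rw [psi_nsq a b hr', psi_sq a b hs'] at heq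
  have hb1' : b - 1 ≠ 0 := sub_ne_zero.mpr hb1
  have key : u = v := by
    have h0 : a * (b - 1) * (u - v) = 0 := by linear_combination heq
    rcases mul_eq_zero.mp h0 with h | h
    · rcases mul_eq_zero.mp h with h | h
      · exact absurd h ha0
      · exact absurd h hb1'
    · exact sub_eq_zero.mp h
  exact hvsq (key ▸ hu')
end AuxLemmas

lemma main00 {F : Type*} [Field F] (hsq : IsSquare (-1:F)) {x y : F} (hx : IsSquare x) (hy : IsSquare y)
    (hxy : x ≠ y) (hx0 : x ≠ 0) (hx1 : x ≠ 1) (hy0 : y ≠ 0) (hy1 : y ≠ 1) :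
    ((x, y) ∈ SSub F 0 0 0 0 ↔ IsSquare ((1-x)*(y-x)) ∧ IsSquare ((1-y)*(y-x))) ∧
    ((x, y) ∈ SSub F 0 0 1 1 ↔ ¬ IsSquare ((x^2*y + x*y - x^2 - y^2)*(y-x)) ∧
        ¬ IsSquare ((x*y^2 + x*y - x^2 - y^2)*(y-x))) := by
  have hd : y - x ≠ 0 := sub_ne_zero.mpr (Ne.symm hxy)
  have hx1' : x - 1 ≠ 0 := sub_ne_zero.mpr hx1
  have hy1' : y - 1 ≠ 0 := sub_ne_zero.mpr hy1
  set B : F := (y - 1)/(y - x) with hB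
  set A : F := x * B with hA
  have hBd : B * (y - x) = y - 1 := div_mul_cancel₀ _ hd
  have hB0 : B ≠ 0 := div_ne_zero hy1' hd
  have hB1 : B ≠ 1 := by
    intro h
    rw [h, one_mul] at hBd
    exact hx1 (by linear_combination -hBd)
  have hA1d : (A - 1) * (y - x) = y * (x - 1) := by
    rw [hA]; linear_combination x * hBd
  have hA0 : A ≠ 0 := mul_ne_zero hx0 hB0
  have hA1 : A ≠ 1 := by
    intro h
    rw [h, sub_self, zero_mul] at hA1d
    rcases mul_eq_zero.mp hA1d.symm with h' | h'
    · exact hy0 h'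
    · exact hx1' h'
  have hA1' : A - 1 ≠ 0 := sub_ne_zero.mpr hA1
  have hABne : A ≠ B := by
    intro h
    rw [hA] at h
    have h2 : (x - 1) * B = 0 := by linear_combination h
    rcases mul_eq_zero.mp h2 with h' | h'
    · exact hx1' h'
    · exact hB0 h'
  have h1B : 1 - B ≠ 0 := sub_ne_zero.mpr (Ne.symm hB1)
  have h1A : 1 - A = y * (1 - B) := by rw [hA]; linear_combination hBd
  have hsig : (A, B) ∈ SigSet F := by
    simp only [SigSet, Set.mem_setOf_eq]
    refine ⟨hABne, hA0, hA1, hB0, hB1, ?_, ?_⟩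
    · rw [hA, mul_assoc]; exact hx.mul ⟨B, rfl⟩
    · rw [show (1-A)*(1-B) = y*((1-B)*(1-B)) from by rw [h1A]; ring]
      exact hy.mul ⟨1-B, rfl⟩
  have hmap : PsiMap (A, B) = (x, y) := by
    simp only [PsiMap, Prod.mk.injEq]
    constructor
    · rw [hA, mul_div_assoc, div_self hB0, mul_one]
    · rw [h1A, mul_div_assoc, div_self h1B, mul_one]
  have huniq : ∀ a b : F, (a, b) ∈ SigSet F → PsiMap (a, b) = (x, y) → a = A ∧ b = B := by
    rintro a b ⟨-, -, -, hb0, hb1, -, -⟩ hPm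
    simp only [PsiMap, Prod.mk.injEq] at hPm
    obtain ⟨h1, h2⟩ := hPm
    have h1b : (1:F) - b ≠ 0 := sub_ne_zero.mpr (Ne.symm hb1)
    rw [div_eq_iff hb0] at h1
    rw [div_eq_iff h1b] at h2
    have hbB : b = B := by
      rw [hB, eq_div_iff hd]
      linear_combination h1 + h2
    exact ⟨by rw [hA, ← hbB, h1], hbB⟩
  have hAsq : IsSquare A ↔ IsSquare ((1-y)*(y-x)) := by
    refine isSquare_congr' (s := (-1) * (x * ((y-x)⁻¹ * (y-x)⁻¹))) ?_ ?_ ?_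
    · exact hsq.mul (hx.mul ⟨(y-x)⁻¹, rfl⟩)
    · exact mul_ne_zero (neg_ne_zero.mpr one_ne_zero)
        (mul_ne_zero hx0 (mul_ne_zero (inv_ne_zero hd) (inv_ne_zero hd)))
    · rw [hA, hB]; field_simp; ring
  have hA1sq : IsSquare (A - 1) ↔ IsSquare ((1-x)*(y-x)) := by
    refine isSquare_congr' (s := (-1) * (y * ((y-x)⁻¹ * (y-x)⁻¹))) ?_ ?_ ?_
    · exact hsq.mul (hy.mul ⟨(y-x)⁻¹, rfl⟩)
    · exact mul_ne_zero (neg_ne_zero.mpr one_ne_zero)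
        (mul_ne_zero hy0 (mul_ne_zero (inv_ne_zero hd) (inv_ne_zero hd)))
    · rw [hA, hB]; field_simp; ring
  constructor
  · -- 0000 case
    constructor
    · rintro h
      rw [SSub, Set.mem_image] at h
      obtain ⟨⟨a, b⟩, hmem, hPm⟩ := h
      simp only [SigSub, Set.mem_setOf_eq] at hmem
      obtain ⟨hsig', ⟨⟨u, v⟩, ⟨⟨hne, heq⟩, hu, hv, hr, hs⟩⟩⟩ := hmem
      obtain ⟨rfl, rfl⟩ := huniq a b hsig' hPm
      simp only at hu hv hr hs heq hne
      have hu' : IsSquare u := hu.mpr trivial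
      have hv' : IsSquare (-v) := hv.mpr trivial
      rw [AssocEq] at heq
      rw [psi_sq A B hu'] at heq hr
      rw [psi_sq A B hv'] at heq hs
      have hr' : IsSquare (A * u - v) := hr.mpr trivial
      have hs' : IsSquare (u - v - A * -v) := hs.mpr trivial
      rw [psi_sq A B hr', psi_sq A B hs'] at heq
      have huv : u = v := by
        have h0 : A * (A - 1) * (u - v) = 0 := by linear_combination heq
        rcases mul_eq_zero.mp h0 with h' | h'
        · rcases mul_eq_zero.mp h' with h'' | h''
          · exact absurd h'' hA0
          · exact absurd h'' hA1'
        · exact sub_eq_zero.mp h'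
      subst huv
      have hu0 : u ≠ 0 := by rintro rfl; exact hne rfl
      constructor
      · apply hA1sq.mp
        have h3 : IsSquare (u * (A - 1)) := by
          rw [show u * (A - 1) = A * u - u from by ring]; exact hr'
        exact (isSquare_mul_iff' hu' hu0 _).mp h3
      · apply hAsq.mp
        have h3 : IsSquare (u * A) := by
          rw [show u * A = u - u - A * -u from by ring]; exact hs'
        exact (isSquare_mul_iff' hu' hu0 _).mp h3
    · rintro ⟨h1, h2⟩
      have hA1s : IsSquare (A - 1) := hA1sq.mpr h1
      have hAs : IsSquare A := hAsq.mpr h2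
      rw [SSub, Set.mem_image]
      refine ⟨(A, B), ?_, hmap⟩
      simp only [SigSub, Set.mem_setOf_eq]
      refine ⟨hsig, ⟨(1, 1), ?_⟩⟩
      simp only [ESub, ESet, Set.mem_setOf_eq]
      refine ⟨⟨by simp, ?_⟩, ?_, ?_, ?_, ?_⟩
      · show AssocEq A B 1 1
        rw [AssocEq, psi_sq A B IsSquare.one,
          psi_sq A B (show IsSquare (-(1:F)) from by simpa using hsq),
          show A * (1:F) - 1 = A - 1 from by ring,
          show (1:F) - 1 - A * -1 = A from by ring,
          psi_sq A B hA1s, psi_sq A B hAs]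
        ring
      · exact ⟨fun _ => by trivial, fun _ => IsSquare.one⟩
      · exact ⟨fun _ => by trivial, fun _ => by simpa using hsq⟩
      · refine ⟨fun _ => by trivial, fun _ => ?_⟩
        show IsSquare (psiOrtho A B 1 - 1)
        rw [psi_sq A B IsSquare.one, show A * (1:F) - 1 = A - 1 from by ring]
        exact hA1s
      · refine ⟨fun _ => by trivial, fun _ => ?_⟩
        show IsSquare (1 - 1 - psiOrtho A B (-1))
        rw [psi_sq A B (show IsSquare (-(1:F)) from by simpa using hsq),
          show (1:F) - 1 - A * -1 = A from by ring]
        exact hAs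
  · -- 0011 case
    have hmsq : IsSquare (x * ((y - x) * (y - x))) := hx.mul ⟨y - x, rfl⟩
    have hm0 : x * ((y - x) * (y - x)) ≠ 0 := mul_ne_zero hx0 (mul_ne_zero hd hd)
    have keyiff1 : ∀ u v : F, IsSquare u → u ≠ 0 → x * v = y * u →
        (IsSquare (A * u - v) ↔ IsSquare ((x^2*y + x*y - x^2 - y^2)*(y-x))) := by
      intro u v hu' hu0 hxv
      refine isSquare_congr2 hmsq hm0 hu' hu0 ?_
      rw [hA]
      linear_combination (x^2*(y-x)*u) * hBd - (y-x)^2 * hxv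
    have keyiff2 : ∀ u v : F, IsSquare u → u ≠ 0 → x * v = y * u →
        (IsSquare (u - v - A * -v) ↔ IsSquare ((x*y^2 + x*y - x^2 - y^2)*(y-x))) := by
      intro u v hu' hu0 hxv
      refine isSquare_congr2 hmsq hm0 hu' hu0 ?_
      rw [hA]
      linear_combination (x^2*(y-x)*v) * hBd + (y-x)*y*(x-1) * hxv
    constructor
    · rintro h
      rw [SSub, Set.mem_image] at h
      obtain ⟨⟨a, b⟩, hmem, hPm⟩ := h
      simp only [SigSub, Set.mem_setOf_eq] at hmem
      obtain ⟨hsig', ⟨⟨u, v⟩, ⟨⟨hne, heq⟩, hu, hv, hr, hs⟩⟩⟩ := hmem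
      obtain ⟨rfl, rfl⟩ := huniq a b hsig' hPm
      simp only at hu hv hr hs heq hne
      have hu' : IsSquare u := hu.mpr trivial
      have hv' : IsSquare (-v) := hv.mpr trivial
      rw [AssocEq] at heq
      rw [psi_sq A B hu'] at heq hr
      rw [psi_sq A B hv'] at heq hs
      have hr' : ¬ IsSquare (A * u - v) := fun h' => absurd (hr.mp h') (by decide)
      have hs' : ¬ IsSquare (u - v - A * -v) := fun h' => absurd (hs.mp h') (by decide)
      rw [psi_nsq A B hr', psi_nsq A B hs'] at heq
      have key0 : B * (A - 1) * u = A * (B - 1) * v := by linear_combination heq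
      have hxv : x * v = y * u := by
        rw [hA, hB] at key0
        field_simp at key0
        have h2 : (y - 1) * ((x - 1) * (x * v - y * u)) = 0 := by linear_combination -(y - 1) * key0
        rcases mul_eq_zero.mp h2 with h' | h'
        · exact absurd h' hy1'
        · rcases mul_eq_zero.mp h' with h'' | h''
          · exact absurd h'' hx1'
          · exact sub_eq_zero.mp h''
      have hu0 : u ≠ 0 := by
        rintro rfl
        rw [mul_zero] at hxv
        have hv0 : v = 0 := by
          rcases mul_eq_zero.mp hxv with h' | h'
          · exact absurd h' hx0
          · exact h'
        exact hne (by rw [hv0])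
      exact ⟨fun h' => hr' ((keyiff1 u v hu' hu0 hxv).mpr h'),
        fun h' => hs' ((keyiff2 u v hu' hu0 hxv).mpr h')⟩
    · rintro ⟨hn1, hn2⟩
      have hv' : IsSquare (y/x) := by rw [div_eq_mul_inv]; exact hy.mul (isSquare_inv'' hx)
      have hnv' : IsSquare (-(y/x)) := (isSquare_neg_iff hsq _).mpr hv'
      have hyx : x * (y/x) = y * 1 := by rw [mul_one]; field_simp
      have hns1 : ¬ IsSquare (A * 1 - y/x) :=
        fun h' => hn1 ((keyiff1 1 (y/x) IsSquare.one one_ne_zero hyx).mp h')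
      have hns2 : ¬ IsSquare (1 - y/x - A * -(y/x)) :=
        fun h' => hn2 ((keyiff2 1 (y/x) IsSquare.one one_ne_zero hyx).mp h')
      rw [SSub, Set.mem_image]
      refine ⟨(A, B), ?_, hmap⟩
      simp only [SigSub, Set.mem_setOf_eq]
      refine ⟨hsig, ⟨(1, y/x), ?_⟩⟩
      simp only [ESub, ESet, Set.mem_setOf_eq]
      refine ⟨⟨by simp, ?_⟩, ?_, ?_, ?_, ?_⟩
      · show AssocEq A B 1 (y/x)
        rw [AssocEq, psi_sq A B IsSquare.one, psi_sq A B hnv',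
          psi_nsq A B hns1, psi_nsq A B hns2]
        rw [hA]
        linear_combination (B - B^2) * hyx - B * hBd
      · exact ⟨fun _ => by trivial, fun _ => IsSquare.one⟩
      · exact ⟨fun _ => by trivial, fun _ => hnv'⟩
      · refine ⟨fun h' => ?_, fun h' => absurd h' (by decide)⟩
        rw [psi_sq A B IsSquare.one] at h'
        exact absurd h' hns1
      · refine ⟨fun h' => ?_, fun h' => absurd h' (by decide)⟩
        rw [psi_sq A B hnv'] at h'
        exact absurd h' hns2

/-- Lemma 2.4: if `-1` is a square then `S_{01}^{00} = S_{01}^{10} = ∅`, and for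
`(x,y) ∈ S`: `(x,y) ∈ S_{00}^{00}` iff `(1-x)(y-x)` and `(1-y)(y-x)` are squares,
and `(x,y) ∈ S_{00}^{11}` iff `(x²y+xy-x²-y²)(y-x)` and `(xy²+xy-x²-y²)(y-x)`
are nonsquares. -/
theorem ssub_neg_one_square (F : Type*) [Field F] [Fintype F]
    (hodd : Odd (Fintype.card F)) (hsq : IsSquare (-1 : F)) :
    SSub F 0 1 0 0 = ∅ ∧ SSub F 0 1 1 0 = ∅ ∧
    ∀ x y : F, (x, y) ∈ SPairs F →
      (((x, y) ∈ SSub F 0 0 0 0 ↔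
          IsSquare ((1 - x) * (y - x)) ∧ IsSquare ((1 - y) * (y - x))) ∧
       ((x, y) ∈ SSub F 0 0 1 1 ↔
          ¬ IsSquare ((x ^ 2 * y + x * y - x ^ 2 - y ^ 2) * (y - x)) ∧
          ¬ IsSquare ((x * y ^ 2 + x * y - x ^ 2 - y ^ 2) * (y - x)))) := by
  refine ⟨empty0100 hsq, empty0110 hsq, fun x y hS => ?_⟩
  obtain ⟨hx, hy, hxy, hx0, hx1, hy0, hy1⟩ := hS
  exact main00 hsq hx hy hxy hx0 hx1 hy0 hy1
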